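/- Let w ∈ S_n have string decomposition w = w_{n−1} ⋯ w_2 w_1 (each w_i = s_{k_i} ⋯ s_i or the identity). Then, for any fixed index i with 1 ≤ i ≤ n−1, the simple root α_i lies in the inversion set N(w) if and only if ℓ(w_i) > ℓ(w_{i−1}), where ℓ(w_0) is taken to be 0 by convention. Equivalently, w(i) > w(i+1) if and only if ℓ(w_i) > ℓ(w_{i−1}). -/

import Mathlib

/-- Simple reflection `s_i` in `S_{n+1}` (type `A_n`), swapping positions `i` and `i+1`. -/
def sgen {n : ℕ} (i : Fin n) : Equiv.Perm (Fin (n + 1)) :=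
  Equiv.swap i.castSucc i.succ

/-- Action of a permutation on a root `ε_{p.1} - ε_{p.2}` of type `A`. -/
def actRoot {n : ℕ} (w : Equiv.Perm (Fin n)) (p : Fin n × Fin n) : Fin n × Fin n :=
  (w p.1, w p.2)

/-- The root `ε_{p.1} - ε_{p.2}` is positive. -/
def IsPosRoot {n : ℕ} (p : Fin n × Fin n) : Prop := p.1 < p.2

/-- The root `ε_{p.1} - ε_{p.2}` is negative. -/
def IsNegRoot {n : ℕ} (p : Fin n × Fin n) : Prop := p.2 < p.1

/-- Inversion set `N(w) = {γ ∈ Φ⁺ : w(γ) ∈ Φ⁻}`. -/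
def invSet {n : ℕ} (w : Equiv.Perm (Fin n)) : Set (Fin n × Fin n) :=
  {p | IsPosRoot p ∧ IsNegRoot (actRoot w p)}

/-- Bruhat length = number of inversions. -/
def len {n : ℕ} (w : Equiv.Perm (Fin n)) : ℕ :=
  (Finset.univ.filter fun p : Fin n × Fin n => p.1 < p.2 ∧ w p.2 < w p.1).card

/-- The parabolic subgroup `W_J` generated by the simple reflections indexed by `J`. -/
def WJ {n : ℕ} (J : Set (Fin n)) : Subgroup (Equiv.Perm (Fin (n + 1))) :=
  Subgroup.closure (sgen '' J)

/-- Membership in the sub-root-system `Φ_J` spanned by the simple roots indexed by `J`: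
all simple roots in the support of the root lie in `J`. -/
def InPhiJ {n : ℕ} (J : Set (Fin n)) (p : Fin (n + 1) × Fin (n + 1)) : Prop :=
  p.1 ≠ p.2 ∧ ∀ k : Fin n, min p.1 p.2 ≤ k.castSucc → k.succ ≤ max p.1 p.2 → k ∈ J

/-- `v` is the minimal-length representative of its coset `vW_J`. -/
def IsMinRep {n : ℕ} (J : Set (Fin n)) (v : Equiv.Perm (Fin (n + 1))) : Prop :=
  ∀ y ∈ WJ J, len v ≤ len (v * y)

/-- The simple reflection `s_j` (`0`-indexed) in `S_{n+1}`, or the identity if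
`j` is out of range. -/
def sN {n : ℕ} (j : ℕ) : Equiv.Perm (Fin (n + 1)) :=
  if h : j + 1 ≤ n then
    Equiv.swap ⟨j, by omega⟩ ⟨j + 1, by omega⟩
  else 1

/-- The string `w_i = s_{i+1-ℓ} s_{i+2-ℓ} ⋯ s_i` of length `ℓ` ending at the simple
reflection `s_i` (the identity when `ℓ = 0`). -/
def wstring {n : ℕ} (i ℓ : ℕ) : Equiv.Perm (Fin (n + 1)) :=
  ((List.range' (i + 1 - ℓ) ℓ).map (sN (n := n))).prod

/-- The product `w_{n-1} w_{n-2} ⋯ w_1 w_0` of the strings encoded by the length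
function `f` (`f i = ℓ(w_i)`). -/
def strProd {n : ℕ} (f : Fin n → ℕ) : Equiv.Perm (Fin (n + 1)) :=
  ((List.finRange n).reverse.map fun i => wstring (n := n) i.val (f i)).prod

lemma sN_apply {n : ℕ} (k : ℕ) (hk : k + 1 ≤ n) (x : Fin (n + 1)) :
    ((sN (n := n) k) x).val =
      if x.val = k then k + 1 else if x.val = k + 1 then k else x.val := by
  rw [sN, dif_pos hk]
  rcases eq_or_ne x.val k with h | h
  · have : x = (⟨k, by omega⟩ : Fin (n+1)) := by ext; exact h
    rw [this, Equiv.swap_apply_left]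
    simp [h]
  · rcases eq_or_ne x.val (k+1) with h2 | h2
    · have : x = (⟨k+1, by omega⟩ : Fin (n+1)) := by ext; exact h2
      rw [this, Equiv.swap_apply_right]
      simp [h2]
    · rw [Equiv.swap_apply_of_ne_of_ne]
      · simp [h, h2]
      · intro hx; apply h; rw [hx]
      · intro hx; apply h2; rw [hx]

/-- action of `wstring j ℓ` on natural values. -/
def wact (j ℓ x : ℕ) : ℕ :=
  if x = j + 1 ∧ 0 < ℓ then j + 1 - ℓ
  else if j + 1 - ℓ ≤ x ∧ x ≤ j then x + 1 else x

lemma wstring_apply {n : ℕ} (j : ℕ) (hj : j + 1 ≤ n) :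
    ∀ ℓ, ℓ ≤ j + 1 → ∀ x : Fin (n + 1),
      ((wstring (n := n) j ℓ) x).val = wact j ℓ x.val := by
  intro ℓ
  induction ℓ with
  | zero =>
    intro _ x
    simp only [wstring, List.range', List.map_nil, List.prod_nil, Equiv.Perm.coe_one, id_eq, wact]
    split_ifs <;> omega
  | succ ℓ ih =>
    intro hℓ x
    have hsplit : wstring (n := n) j (ℓ+1) = sN (j - ℓ) * wstring (n := n) j ℓ := by
      have h1 : j + 1 - (ℓ + 1) = j - ℓ := by omega
      have h2 : j - ℓ + 1 = j + 1 - ℓ := by omega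
      rw [wstring, h1, List.range'_succ, h2, List.map_cons, List.prod_cons, wstring]
    rw [hsplit]
    have hy := ih (by omega) x
    rw [Equiv.Perm.mul_apply, sN_apply (j - ℓ) (by omega), hy]
    unfold wact
    split_ifs <;> omega

/-- partial products `w_{m-1} ⋯ w_0`. -/
def pp {n : ℕ} (f : Fin n → ℕ) : ℕ → Equiv.Perm (Fin (n + 1))
  | 0 => 1
  | m + 1 => wstring m (if h : m < n then f ⟨m, h⟩ else 0) * pp f m

lemma pp_eq_strProd {n : ℕ} (f : Fin n → ℕ) : strProd f = pp f n := by
  have key : ∀ m, m ≤ n →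
      ((((List.finRange n).take m).reverse).map
        (fun i => wstring (n := n) i.val (f i))).prod = pp f m := by
    intro m
    induction m with
    | zero => intro _; simp [pp]
    | succ m ih =>
      intro hm
      have hm' : m < n := hm
      have hget : (List.finRange n)[m]? = some ⟨m, hm'⟩ := by
        rw [List.getElem?_eq_getElem (by simpa using hm')]
        congr 1
        have := List.get_finRange (n := n) ⟨m, by simpa using hm'⟩
        simpa [List.get_eq_getElem] using this
      rw [List.take_succ, hget]
      simp only [Option.toList_some, List.reverse_append, List.reverse_singleton,
        List.singleton_append, List.map_cons, List.prod_cons, ih (by omega)]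
      rw [pp, dif_pos hm']
  have := key n le_rfl
  rw [strProd]
  rw [List.take_of_length_le (by simp)] at this
  exact this

lemma pp_fix {n : ℕ} (f : Fin n → ℕ) (hf : ∀ i, f i ≤ i.val + 1) :
    ∀ m, m ≤ n → ∀ x : Fin (n + 1), m < x.val → pp f m x = x := by
  intro m
  induction m with
  | zero => intro _ x _; rfl
  | succ m ih =>
    intro hm x hx
    rw [pp, dif_pos (show m < n by omega), Equiv.Perm.mul_apply,
      ih (by omega) x (by omega)]
    have := wstring_apply (n := n) m (by omega) (f ⟨m, by omega⟩)
      (by simpa using hf ⟨m, by omega⟩) x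
    apply Fin.ext
    rw [this]
    unfold wact
    split_ifs <;> omega

lemma key {n : ℕ} (f : Fin n → ℕ) (hf : ∀ i, f i ≤ i.val + 1) (i : Fin n) :
    ∀ m, i.val + 1 ≤ m → m ≤ n →
      ((pp f m i.succ).val < (pp f m i.castSucc).val ↔
        (if h : 0 < i.val then f ⟨i.val - 1, Nat.lt_of_le_of_lt (Nat.sub_le _ _) i.isLt⟩
          else 0) < f i) ∧
      ((pp f m i.castSucc).val < (pp f m i.succ).val ↔
        ¬ ((if h : 0 < i.val then f ⟨i.val - 1, Nat.lt_of_le_of_lt (Nat.sub_le _ _) i.isLt⟩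
          else 0) < f i)) ∧
      (pp f m i.castSucc).val ≤ m ∧ (pp f m i.succ).val ≤ m := by
  set F : ℕ := (if h : 0 < i.val then f ⟨i.val - 1, Nat.lt_of_le_of_lt (Nat.sub_le _ _) i.isLt⟩
          else 0) with hF
  have hFle : F ≤ i.val := by
    rw [hF]
    split_ifs with h
    · have := hf ⟨i.val - 1, Nat.lt_of_le_of_lt (Nat.sub_le _ _) i.isLt⟩
      simp at this; omega
    · omega
  have hfi : f i ≤ i.val + 1 := hf i
  -- value of pp f i.val at i.castSucc
  have hprev : (pp f i.val i.castSucc).val = i.val - F := by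
    rcases Nat.eq_zero_or_eq_succ_pred i.val with h0 | h0
    · rw [h0]
      have : F = 0 := by rw [hF, dif_neg (by omega)]
      simp [pp, this, h0]
    · set k := i.val - 1 with hk
      have hk' : k < n := by omega
      have hik : i.val = k + 1 := h0
      rw [hik, pp, dif_pos hk', Equiv.Perm.mul_apply,
        pp_fix f hf k (by omega) i.castSucc (by simp; omega)]
      have hFk : F = f ⟨k, hk'⟩ := by
        rw [hF, dif_pos (by omega)]
      have := wstring_apply (n := n) k (by omega) (f ⟨k, hk'⟩)
        (by simpa using hf ⟨k, hk'⟩) i.castSucc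
      rw [this]
      unfold wact
      have hcs : (i.castSucc : Fin (n+1)).val = k + 1 := by simp; omega
      rw [hcs, hFk]
      have hfk : f ⟨k, hk'⟩ ≤ k + 1 := by simpa using hf ⟨k, hk'⟩
      split_ifs <;> omega
  have hsucc : (pp f i.val i.succ) = i.succ :=
    pp_fix f hf i.val (by omega) i.succ (by simp)
  -- base case m = i.val + 1
  have hbase_a : (pp f (i.val + 1) i.castSucc).val = wact i.val (f i) (i.val - F) := by
    rw [pp, dif_pos i.isLt, Equiv.Perm.mul_apply]
    have heta : (⟨i.val, i.isLt⟩ : Fin n) = i := by ext; rfl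
    rw [heta]
    rw [wstring_apply (n := n) i.val (by omega) (f i) (by omega), hprev]
  have hbase_b : (pp f (i.val + 1) i.succ).val = wact i.val (f i) (i.val + 1) := by
    rw [pp, dif_pos i.isLt, Equiv.Perm.mul_apply]
    have heta : (⟨i.val, i.isLt⟩ : Fin n) = i := by ext; rfl
    rw [heta, hsucc]
    rw [wstring_apply (n := n) i.val (by omega) (f i) (by omega), Fin.val_succ]
  intro m hm
  induction m with
  | zero => omega
  | succ m ih =>
    intro hmn
    rcases Nat.lt_or_ge i.val m with hlt | hge
    · -- inductive step: m ≥ i.val + 1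
      obtain ⟨IH1, IH2, IH3, IH4⟩ := ih (by omega) (by omega)
      have hmn' : m < n := hmn
      have heq : ∀ x : Fin (n+1), (pp f (m+1) x).val =
          wact m (f ⟨m, hmn'⟩) ((pp f m x).val) := by
        intro x
        rw [pp, dif_pos hmn', Equiv.Perm.mul_apply,
          wstring_apply (n := n) m (by omega) (f ⟨m, hmn'⟩)
            (by simpa using hf ⟨m, hmn'⟩)]
      rw [heq i.succ, heq i.castSucc]
      have hfm : f ⟨m, hmn'⟩ ≤ m + 1 := by simpa using hf ⟨m, hmn'⟩
      by_cases hC : F < f i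
      · have h1 : (pp f m i.succ).val < (pp f m i.castSucc).val := IH1.mpr hC
        refine ⟨iff_of_true ?_ hC, iff_of_false ?_ (not_not_intro hC), ?_, ?_⟩ <;>
          (unfold wact; split_ifs <;> omega)
      · have h1 : (pp f m i.castSucc).val < (pp f m i.succ).val := IH2.mpr hC
        refine ⟨iff_of_false ?_ hC, iff_of_true ?_ hC, ?_, ?_⟩ <;>
          (unfold wact; split_ifs <;> omega)
    · -- base: m = i.val
      have hmi : m = i.val := by omega
      subst hmi
      rw [hbase_a, hbase_b]
      by_cases hC : F < f i
      · refine ⟨iff_of_true ?_ hC, iff_of_false ?_ (not_not_intro hC), ?_, ?_⟩ <;>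
          (unfold wact; split_ifs <;> omega)
      · refine ⟨iff_of_false ?_ hC, iff_of_true ?_ hC, ?_, ?_⟩ <;>
          (unfold wact; split_ifs <;> omega)

/-- if `w = w_{n-1} ⋯ w_0` is the string decomposition of `w` (with
`f i = ℓ(w_i)`), then for any index `i` the simple root `α_i` lies in `N(w)` iff
`ℓ(w_i) > ℓ(w_{i-1})` (with `ℓ(w_{-1}) = 0`); equivalently, `w(i) > w(i+1)` iff
`ℓ(w_i) > ℓ(w_{i-1})`. -/
theorem statement11 {n : ℕ} (w : Equiv.Perm (Fin (n + 1))) (f : Fin n → ℕ)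
    (hf : ∀ i, f i ≤ i.val + 1) (hw : w = strProd f) (i : Fin n) :
    ((i.castSucc, i.succ) ∈ invSet w ↔
      (if h : 0 < i.val then f ⟨i.val - 1, Nat.lt_of_le_of_lt (Nat.sub_le _ _) i.isLt⟩
        else 0) < f i) ∧
    (w i.succ < w i.castSucc ↔
      (if h : 0 < i.val then f ⟨i.val - 1, Nat.lt_of_le_of_lt (Nat.sub_le _ _) i.isLt⟩
        else 0) < f i) := by
  obtain ⟨K1, _, _, _⟩ := key f hf i n (by omega) le_rfl
  rw [← pp_eq_strProd] at K1
  have hw' : w i.succ < w i.castSucc ↔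
      (if h : 0 < i.val then f ⟨i.val - 1, Nat.lt_of_le_of_lt (Nat.sub_le _ _) i.isLt⟩
        else 0) < f i := by
    rw [hw, Fin.lt_def]; exact K1
  refine ⟨?_, hw'⟩
  simp only [invSet, Set.mem_setOf_eq, IsPosRoot, IsNegRoot, actRoot]
  rw [← hw']
  exact and_iff_right (Fin.castSucc_lt_succ : i.castSucc < i.succ)
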